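/- Let G be a finite group, F a field with char(F) not dividing |G|, V a finite-dimensional F-vector space, ρ: G → GL(V) a representation, and W a G-invariant subspace of V. Then h_{G,ρ}(W) ≤ h_{G,ρ}(V), i.e. the maximum codimension of a (G,ρ)-covering subspace of W (with respect to the restricted action) is at most the maximum codimension of a (G,ρ)-covering subspace of V. -/

import Mathlib

open Module

/-- `hrep ρ W` : the maximum codimension (inside `W`) of a subspace `U ≤ W` such that the
union of the images of `U` under the action of `G` (via `ρ`) covers `W`. -/
noncomputable def hrep {F G V : Type*} [Field F] [Monoid G] [AddCommGroup V] [Module F V]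
    (ρ : Representation F G V) (W : Submodule F V) : ℕ :=
  sSup {k | ∃ U : Submodule F V, U ≤ W ∧ (∀ v ∈ W, ∃ g : G, ρ g v ∈ U) ∧
    Module.finrank F W - Module.finrank F U = k}

/-- Maschke: a `G`-invariant subspace has a `G`-invariant complement. -/
lemma maschke_compl {F V G : Type*} [Field F] [AddCommGroup V] [Module F V]
    [Group G] [Finite G] (ρ : Representation F G V) (W : Submodule F V)
    (hW : ∀ g : G, ∀ w ∈ W, ρ g w ∈ W) (hcard : (Nat.card G : F) ≠ 0) :
    ∃ W' : Submodule F V, IsCompl W W' ∧ ∀ g : G, ∀ w ∈ W', ρ g w ∈ W' := by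
  haveI : Fintype G := Fintype.ofFinite G
  have hcard' : (Fintype.card G : F) ≠ 0 := by rwa [Nat.card_eq_fintype_card] at hcard
  obtain ⟨C, hC⟩ := Submodule.exists_isCompl W
  set π0 : V →ₗ[F] V := W.subtype ∘ₗ W.projectionOnto C hC with hπ0def
  have hπ0mem : ∀ v : V, π0 v ∈ W := fun v => (W.projectionOnto C hC v).2
  have hπ0fix : ∀ w ∈ W, π0 w = w := by
    intro w hw
    have := Submodule.linearProjOfIsCompl_apply_left hC ⟨w, hw⟩
    simp only [hπ0def, LinearMap.comp_apply, Submodule.subtype_apply]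
    rw [show w = ((⟨w, hw⟩ : W) : V) from rfl, this]
  set c : F := (Fintype.card G : F)⁻¹ with hc
  set S : V →ₗ[F] V := ∑ g : G, (ρ g⁻¹) ∘ₗ π0 ∘ₗ (ρ g) with hS
  set T : V →ₗ[F] V := c • S with hT
  have hSapply : ∀ v : V, S v = ∑ g : G, ρ g⁻¹ (π0 (ρ g v)) := by
    intro v; rw [hS, LinearMap.sum_apply]; rfl
  have hρinv : ∀ (g : G) (v : V), ρ g⁻¹ (ρ g v) = v := by
    intro g v
    rw [← Module.End.mul_apply, ← map_mul, inv_mul_cancel, map_one, Module.End.one_apply]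
  -- T fixes W pointwise
  have hT1 : ∀ w ∈ W, T w = w := by
    intro w hw
    have hSw : S w = (Fintype.card G) • w := by
      rw [hSapply]
      rw [Finset.sum_congr rfl (fun g _ => by rw [hπ0fix _ (hW g w hw), hρinv])]
      simp [Finset.card_univ]
    rw [hT, LinearMap.smul_apply, hSw, ← Nat.cast_smul_eq_nsmul F, smul_smul, hc,
      inv_mul_cancel₀ hcard', one_smul]
  -- range of T lies in W
  have hT2 : ∀ v : V, T v ∈ W := by
    intro v
    rw [hT, LinearMap.smul_apply]
    refine Submodule.smul_mem _ _ ?_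
    rw [hSapply]
    exact Submodule.sum_mem _ fun g _ => hW g⁻¹ _ (hπ0mem _)
  -- T is equivariant
  have hT3 : ∀ (g : G) (v : V), T (ρ g v) = ρ g (T v) := by
    intro g v
    rw [hT, LinearMap.smul_apply, LinearMap.smul_apply, map_smul]
    congr 1
    rw [hSapply, hSapply, map_sum]
    refine Fintype.sum_bijective (· * g) (Group.mulRight_bijective g) _ _ fun h => ?_
    have e2 : ∀ x : V, ρ g (ρ (h * g)⁻¹ x) = ρ h⁻¹ x := by
      intro x
      rw [← Module.End.mul_apply, ← map_mul, mul_inv_rev, mul_inv_cancel_left]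
    have e3 : ρ (h * g) v = ρ h (ρ g v) := by
      rw [map_mul]; rfl
    rw [e2 (π0 (ρ (h * g) v)), e3]
  -- the invariant complement
  set Tc : V →ₗ[F] W := LinearMap.codRestrict W T hT2 with hTc
  have hker : ∀ v : V, v ∈ LinearMap.ker Tc ↔ T v = 0 := by
    intro v
    rw [LinearMap.mem_ker, ← Submodule.coe_eq_zero, hTc, LinearMap.codRestrict_apply]
  refine ⟨LinearMap.ker Tc, LinearMap.isCompl_of_proj fun x => Subtype.ext (hT1 x x.2), ?_⟩
  intro g w hw
  rw [hker] at hw ⊢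
  rw [hT3, hw, map_zero]

/-- For G finite with char F ∤ |G| and W a G-invariant subspace of V,
h_{G,ρ}(W) ≤ h_{G,ρ}(V). -/
theorem stmt_12 (G : Type*) [Group G] [Finite G] (F V : Type*) [Field F] [AddCommGroup V]
    [Module F V] [FiniteDimensional F V] (hchar : ¬ (ringChar F ∣ Nat.card G))
    (ρ : Representation F G V) (W : Submodule F V)
    (hW : ∀ g : G, ∀ w ∈ W, ρ g w ∈ W) :
    hrep ρ W ≤ hrep ρ (⊤ : Submodule F V) := by
  have hcard : (Nat.card G : F) ≠ 0 := fun h =>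
    hchar ((CharP.cast_eq_zero_iff F (ringChar F) _).mp h)
  obtain ⟨W', hcompl, hW'⟩ := maschke_compl ρ W hW hcard
  unfold hrep
  apply csSup_le_csSup
  · exact ⟨finrank F (⊤ : Submodule F V), fun k hk => by
      obtain ⟨U, _, _, hk⟩ := hk
      exact hk ▸ Nat.sub_le _ _⟩
  · exact ⟨0, W, le_rfl, fun v hv => ⟨1, by simpa using hv⟩, Nat.sub_self _⟩
  · rintro k ⟨U, hUW, hcov, hk⟩
    refine ⟨U ⊔ W', le_top, ?_, ?_⟩
    · intro v _
      have hv : v ∈ W ⊔ W' := by rw [hcompl.sup_eq_top]; trivial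
      obtain ⟨w, hw, w', hw', rfl⟩ := Submodule.mem_sup.mp hv
      obtain ⟨g, hg⟩ := hcov w hw
      exact ⟨g, by rw [map_add]; exact Submodule.add_mem_sup hg (hW' g w' hw')⟩
    · have h1 : finrank F (⊤ : Submodule F V) = finrank F W + finrank F W' := by
        rw [finrank_top]
        exact (Submodule.finrank_add_eq_of_isCompl hcompl).symm
      have h2 : finrank F ↥(U ⊔ W') + finrank F ↥(U ⊓ W') = finrank F U + finrank F W' :=
        Submodule.finrank_sup_add_finrank_inf_eq U W'
      have h3 : U ⊓ W' = ⊥ := by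
        rw [eq_bot_iff]
        exact le_trans (inf_le_inf_right W' hUW) hcompl.disjoint.le_bot
      rw [h3, finrank_bot] at h2
      have h5 : finrank F U ≤ finrank F W := Submodule.finrank_mono hUW
      omega
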